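/- The quotient of G_4^3 by the normal closure of the set {abc, bca, cab} is isomorphic to the free product (ℤ/2 × ℤ/2) * ℤ/2, by an isomorphism under which the classes of a and b generate the first factor ℤ/2 × ℤ/2 (with class of c equal to the class of ab) and the class of d generates the second factor ℤ/2. -/

import Mathlib

/-- The generators of the free group on four letters `a, b, c, d`. -/
def x : Fin 4 → FreeGroup (Fin 4) := FreeGroup.of

/-- The relators of the group `G_4^3`:
`a², b², c², d², (abcd)², (bcad)², (cabd)²`. -/
def rels43 : Set (FreeGroup (Fin 4)) :=
  {x 0 ^ 2, x 1 ^ 2, x 2 ^ 2, x 3 ^ 2,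
    (x 0 * x 1 * x 2 * x 3) ^ 2, (x 1 * x 2 * x 0 * x 3) ^ 2, (x 2 * x 0 * x 1 * x 3) ^ 2}

/-- The group `G_4^3`. -/
abbrev G43 : Type := PresentedGroup rels43

/-- The generator `a` of `G_4^3`. -/
def ga : G43 := PresentedGroup.of (rels := rels43) 0
/-- The generator `b` of `G_4^3`. -/
def gb : G43 := PresentedGroup.of (rels := rels43) 1
/-- The generator `c` of `G_4^3`. -/
def gc : G43 := PresentedGroup.of (rels := rels43) 2
/-- The generator `d` of `G_4^3`. -/
def gd : G43 := PresentedGroup.of (rels := rels43) 3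

/-- The normal closure of `{abc, bca, cab}` in `G_4^3`. -/
def C43 : Subgroup G43 := Subgroup.normalClosure {ga * gb * gc, gb * gc * ga, gc * ga * gb}

instance : C43.Normal := Subgroup.normalClosure_normal

/-- The quotient of `G_4^3` by the normal closure of `{abc, bca, cab}` is
isomorphic to the free product `(ℤ/2 × ℤ/2) * ℤ/2`, by an isomorphism under which the classes
of `a` and `b` generate the first factor `ℤ/2 × ℤ/2` (with the class of `c` equal to the class
of `ab`) and the class of `d` generates the second factor `ℤ/2`. -/
/- ## auxiliary material -/


abbrev Hgrp : Type := Monoid.Coprod (Multiplicative (ZMod 2 × ZMod 2)) (Multiplicative (ZMod 2))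
abbrev Qgrp : Type := G43 ⧸ C43

def fgen : Fin 4 → Hgrp :=
  ![Monoid.Coprod.inl (Multiplicative.ofAdd ((1 : ZMod 2), (0 : ZMod 2))),
    Monoid.Coprod.inl (Multiplicative.ofAdd ((0 : ZMod 2), (1 : ZMod 2))),
    Monoid.Coprod.inl (Multiplicative.ofAdd ((1 : ZMod 2), (1 : ZMod 2))),
    Monoid.Coprod.inr (Multiplicative.ofAdd (1 : ZMod 2))]

lemma relcheck : ∀ r ∈ rels43, FreeGroup.lift fgen r = 1 := by
  intro r hr
  have h1 : Monoid.Coprod.inl (M := Multiplicative (ZMod 2 × ZMod 2))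
      (N := Multiplicative (ZMod 2))
      (Multiplicative.ofAdd ((1 : ZMod 2), (0 : ZMod 2))) *
      Monoid.Coprod.inl (Multiplicative.ofAdd ((0 : ZMod 2), (1 : ZMod 2))) *
      Monoid.Coprod.inl (Multiplicative.ofAdd ((1 : ZMod 2), (1 : ZMod 2))) = 1 := by
    rw [← map_mul, ← map_mul,
      show (Multiplicative.ofAdd ((1 : ZMod 2), (0 : ZMod 2)) *
        Multiplicative.ofAdd ((0 : ZMod 2), (1 : ZMod 2)) *
        Multiplicative.ofAdd ((1 : ZMod 2), (1 : ZMod 2))) = 1 by decide, map_one]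
  simp only [rels43, Set.mem_insert_iff, Set.mem_singleton_iff] at hr
  rcases hr with rfl | rfl | rfl | rfl | rfl | rfl | rfl <;>
    simp only [x, map_pow, map_mul, FreeGroup.lift_apply_of, fgen, Matrix.cons_val_zero,
      Matrix.cons_val_one, Matrix.head_cons, Matrix.cons_val_two, Matrix.tail_cons,
      Matrix.cons_val_three]
  · rw [← map_pow, show (Multiplicative.ofAdd ((1 : ZMod 2), (0 : ZMod 2))) ^ 2 = 1 by decide,
      map_one]
  · rw [← map_pow, show (Multiplicative.ofAdd ((0 : ZMod 2), (1 : ZMod 2))) ^ 2 = 1 by decide,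
      map_one]
  · rw [← map_pow, show (Multiplicative.ofAdd ((1 : ZMod 2), (1 : ZMod 2))) ^ 2 = 1 by decide,
      map_one]
  · rw [← map_pow, show (Multiplicative.ofAdd (1 : ZMod 2)) ^ 2 = 1 by decide, map_one]
  · rw [h1, one_mul, ← map_pow, show (Multiplicative.ofAdd (1 : ZMod 2)) ^ 2 = 1 by decide,
      map_one]
  · rw [show Monoid.Coprod.inl (M := Multiplicative (ZMod 2 × ZMod 2))
        (N := Multiplicative (ZMod 2))
        (Multiplicative.ofAdd ((0 : ZMod 2), (1 : ZMod 2))) *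
        Monoid.Coprod.inl (Multiplicative.ofAdd ((1 : ZMod 2), (1 : ZMod 2))) *
        Monoid.Coprod.inl (Multiplicative.ofAdd ((1 : ZMod 2), (0 : ZMod 2))) = 1 by
      rw [← map_mul, ← map_mul, show (Multiplicative.ofAdd ((0 : ZMod 2), (1 : ZMod 2)) *
        Multiplicative.ofAdd ((1 : ZMod 2), (1 : ZMod 2)) *
        Multiplicative.ofAdd ((1 : ZMod 2), (0 : ZMod 2))) = 1 by decide, map_one],
      one_mul, ← map_pow, show (Multiplicative.ofAdd (1 : ZMod 2)) ^ 2 = 1 by decide, map_one]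
  · rw [show Monoid.Coprod.inl (M := Multiplicative (ZMod 2 × ZMod 2))
        (N := Multiplicative (ZMod 2))
        (Multiplicative.ofAdd ((1 : ZMod 2), (1 : ZMod 2))) *
        Monoid.Coprod.inl (Multiplicative.ofAdd ((1 : ZMod 2), (0 : ZMod 2))) *
        Monoid.Coprod.inl (Multiplicative.ofAdd ((0 : ZMod 2), (1 : ZMod 2))) = 1 by
      rw [← map_mul, ← map_mul, show (Multiplicative.ofAdd ((1 : ZMod 2), (1 : ZMod 2)) *
        Multiplicative.ofAdd ((1 : ZMod 2), (0 : ZMod 2)) *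
        Multiplicative.ofAdd ((0 : ZMod 2), (1 : ZMod 2))) = 1 by decide, map_one],
      one_mul, ← map_pow, show (Multiplicative.ofAdd (1 : ZMod 2)) ^ 2 = 1 by decide, map_one]

def phi0 : G43 →* Hgrp := PresentedGroup.toGroup relcheck

lemma phi0_ker : C43 ≤ phi0.ker := by
  apply Subgroup.normalClosure_le_normal
  intro g hg
  simp only [Set.mem_insert_iff, Set.mem_singleton_iff] at hg
  rcases hg with rfl | rfl | rfl <;>
  · rw [SetLike.mem_coe, MonoidHom.mem_ker]
    simp only [map_mul, ga, gb, gc, phi0, PresentedGroup.toGroup.of, fgen,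
      Matrix.cons_val_zero, Matrix.cons_val_one, Matrix.head_cons, Matrix.cons_val_two,
      Matrix.tail_cons]
    rw [← map_mul, ← map_mul]
    rw [show (1 : Hgrp) = Monoid.Coprod.inl 1 from (map_one _).symm]
    exact congrArg Monoid.Coprod.inl (by decide)

def phi : Qgrp →* Hgrp := QuotientGroup.lift C43 phi0 phi0_ker

def qa : Qgrp := QuotientGroup.mk ga
def qb : Qgrp := QuotientGroup.mk gb
def qc : Qgrp := QuotientGroup.mk gc
def qd : Qgrp := QuotientGroup.mk gd

lemma rel_one {i : Fin 4} (h : x i ^ 2 ∈ rels43) :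
    PresentedGroup.of (rels := rels43) i ^ 2 = 1 := by
  change (QuotientGroup.mk (x i ^ 2) : PresentedGroup rels43) = 1
  rw [QuotientGroup.eq_one_iff]
  exact Subgroup.subset_normalClosure h

lemma ga_sq : ga ^ 2 = 1 := rel_one (by simp [rels43])
lemma gb_sq : gb ^ 2 = 1 := rel_one (by simp [rels43])
lemma gc_sq : gc ^ 2 = 1 := rel_one (by simp [rels43])
lemma gd_sq : gd ^ 2 = 1 := rel_one (by simp [rels43])

lemma qa_sq : qa ^ 2 = 1 := by rw [qa, ← QuotientGroup.mk_pow, ga_sq]; rfl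
lemma qb_sq : qb ^ 2 = 1 := by rw [qb, ← QuotientGroup.mk_pow, gb_sq]; rfl
lemma qc_sq : qc ^ 2 = 1 := by rw [qc, ← QuotientGroup.mk_pow, gc_sq]; rfl
lemma qd_sq : qd ^ 2 = 1 := by rw [qd, ← QuotientGroup.mk_pow, gd_sq]; rfl

lemma qabc : qa * qb * qc = 1 := by
  rw [qa, qb, qc, ← QuotientGroup.mk_mul, ← QuotientGroup.mk_mul, QuotientGroup.eq_one_iff]
  exact Subgroup.subset_normalClosure (by simp)

lemma inv_self {G : Type*} [Group G] {g : G} (h : g ^ 2 = 1) : g⁻¹ = g :=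
  inv_eq_of_mul_eq_one_left (by rw [← sq, h])

lemma qc_eq : qc = qb * qa := by
  have h : (qa * qb)⁻¹ = qc := inv_eq_of_mul_eq_one_right qabc
  rw [← h, mul_inv_rev, inv_self qa_sq, inv_self qb_sq]

lemma qcomm : qa * qb = qb * qa := by
  have h : (qb * qa) ^ 2 = 1 := by rw [← qc_eq]; exact qc_sq
  calc qa * qb = (qb * qa)⁻¹ := by rw [mul_inv_rev, inv_self qa_sq, inv_self qb_sq]
  _ = qb * qa := inv_self h

lemma pow_mod_two {G : Type*} [Group G] {g : G} (h : g ^ 2 = 1) (n : ℕ) :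
    g ^ (n % 2) = g ^ n := by
  conv_rhs => rw [← Nat.div_add_mod n 2, pow_add, pow_mul, h, one_pow, one_mul]

lemma pow_zmod_add {G : Type*} [Group G] {g : G} (h : g ^ 2 = 1) (i j : ZMod 2) :
    g ^ (i + j).val = g ^ i.val * g ^ j.val := by
  rw [ZMod.val_add, pow_mod_two h, pow_add]

def psi1 : Multiplicative (ZMod 2 × ZMod 2) →* Qgrp where
  toFun p := qa ^ (p.toAdd.1.val) * qb ^ (p.toAdd.2.val)
  map_one' := by simp
  map_mul' p q := by
    have hq : Multiplicative.toAdd (p * q) = p.toAdd + q.toAdd := rfl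
    rw [hq, Prod.fst_add, Prod.snd_add, pow_zmod_add qa_sq, pow_zmod_add qb_sq]
    have hc : Commute (qb ^ p.toAdd.2.val) (qa ^ q.toAdd.1.val) :=
      (Commute.pow_pow (by exact qcomm.symm) _ _)
    exact (hc.mul_mul_mul_comm _ _).symm

def psi2 : Multiplicative (ZMod 2) →* Qgrp where
  toFun n := qd ^ n.toAdd.val
  map_one' := by simp
  map_mul' p q := by
    have hq : Multiplicative.toAdd (p * q) = p.toAdd + q.toAdd := rfl
    rw [hq, pow_zmod_add qd_sq]

def psi : Hgrp →* Qgrp := Monoid.Coprod.lift psi1 psi2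

lemma phi_qa : phi qa = Monoid.Coprod.inl (Multiplicative.ofAdd ((1 : ZMod 2), (0 : ZMod 2))) := by
  rw [qa, phi, QuotientGroup.lift_mk, ga, phi0, PresentedGroup.toGroup.of]; rfl
lemma phi_qb : phi qb = Monoid.Coprod.inl (Multiplicative.ofAdd ((0 : ZMod 2), (1 : ZMod 2))) := by
  rw [qb, phi, QuotientGroup.lift_mk, gb, phi0, PresentedGroup.toGroup.of]; rfl
lemma phi_qc : phi qc = Monoid.Coprod.inl (Multiplicative.ofAdd ((1 : ZMod 2), (1 : ZMod 2))) := by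
  rw [qc, phi, QuotientGroup.lift_mk, gc, phi0, PresentedGroup.toGroup.of]; rfl
lemma phi_qd : phi qd = Monoid.Coprod.inr (Multiplicative.ofAdd (1 : ZMod 2)) := by
  rw [qd, phi, QuotientGroup.lift_mk, gd, phi0, PresentedGroup.toGroup.of]; rfl

lemma psi_phi : psi.comp phi = MonoidHom.id Qgrp := by
  apply QuotientGroup.monoidHom_ext
  apply PresentedGroup.ext
  intro i
  fin_cases i <;>
    simp only [MonoidHom.comp_apply, QuotientGroup.mk'_apply, MonoidHom.id_apply]
  · show psi (phi qa) = qa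
    rw [phi_qa, psi, Monoid.Coprod.lift_apply_inl, psi1]
    show qa ^ (1 : ZMod 2).val * qb ^ (0 : ZMod 2).val = qa
    norm_num [show ((1 : ZMod 2)).val = 1 from rfl, show ((0 : ZMod 2)).val = 0 from rfl]
  · show psi (phi qb) = qb
    rw [phi_qb, psi, Monoid.Coprod.lift_apply_inl, psi1]
    show qa ^ (0 : ZMod 2).val * qb ^ (1 : ZMod 2).val = qb
    norm_num [show ((1 : ZMod 2)).val = 1 from rfl, show ((0 : ZMod 2)).val = 0 from rfl]
  · show psi (phi qc) = qc
    rw [phi_qc, psi, Monoid.Coprod.lift_apply_inl, psi1]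
    show qa ^ (1 : ZMod 2).val * qb ^ (1 : ZMod 2).val = qc
    norm_num [show ((1 : ZMod 2)).val = 1 from rfl]
    rw [qc_eq]; exact qcomm
  · show psi (phi qd) = qd
    rw [phi_qd, psi, Monoid.Coprod.lift_apply_inr, psi2]
    show qd ^ (1 : ZMod 2).val = qd
    norm_num [show ((1 : ZMod 2)).val = 1 from rfl]

lemma phi_psi : phi.comp psi = MonoidHom.id Hgrp := by
  apply Monoid.Coprod.hom_ext
  · refine MonoidHom.ext fun p => ?_
    simp only [MonoidHom.coe_comp, Function.comp_apply, MonoidHom.id_comp]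
    show phi (psi (Monoid.Coprod.inl p)) = Monoid.Coprod.inl p
    rw [psi, Monoid.Coprod.lift_apply_inl]
    show phi (qa ^ (Multiplicative.toAdd p).1.val * qb ^ (Multiplicative.toAdd p).2.val) = _
    rw [map_mul, map_pow, map_pow, phi_qa, phi_qb]
    have hp : ∀ (y : Multiplicative (ZMod 2 × ZMod 2)) (n : ℕ),
        (Monoid.Coprod.inl y : Hgrp) ^ n = Monoid.Coprod.inl (y ^ n) :=
      fun y n => (map_pow (Monoid.Coprod.inl : Multiplicative (ZMod 2 × ZMod 2) →* Hgrp) y n).symm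
    rw [hp, hp, ← map_mul]
    have key : ∀ q : Multiplicative (ZMod 2 × ZMod 2),
        (Multiplicative.ofAdd ((1 : ZMod 2), (0 : ZMod 2))) ^ (Multiplicative.toAdd q).1.val *
        (Multiplicative.ofAdd ((0 : ZMod 2), (1 : ZMod 2))) ^ (Multiplicative.toAdd q).2.val
        = q := by decide
    rw [key p]
  · refine MonoidHom.ext fun p => ?_
    simp only [MonoidHom.coe_comp, Function.comp_apply, MonoidHom.id_comp]
    show phi (psi (Monoid.Coprod.inr p)) = Monoid.Coprod.inr p
    rw [psi, Monoid.Coprod.lift_apply_inr]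
    show phi (qd ^ (Multiplicative.toAdd p).val) = _
    rw [map_pow, phi_qd]
    have hp : ∀ (y : Multiplicative (ZMod 2)) (n : ℕ),
        (Monoid.Coprod.inr y : Hgrp) ^ n = Monoid.Coprod.inr (y ^ n) :=
      fun y n => (map_pow (Monoid.Coprod.inr : Multiplicative (ZMod 2) →* Hgrp) y n).symm
    rw [hp]
    have key : ∀ q : Multiplicative (ZMod 2),
        (Multiplicative.ofAdd (1 : ZMod 2)) ^ (Multiplicative.toAdd q).val = q := by decide
    rw [key p]

noncomputable def e0 : Qgrp ≃* Hgrp := MonoidHom.toMulEquiv phi psi psi_phi phi_psi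

theorem stmt_4 : ∃ e : (G43 ⧸ C43) ≃*
      Monoid.Coprod (Multiplicative (ZMod 2 × ZMod 2)) (Multiplicative (ZMod 2)),
    e (QuotientGroup.mk ga) = Monoid.Coprod.inl (Multiplicative.ofAdd (1, 0)) ∧
    e (QuotientGroup.mk gb) = Monoid.Coprod.inl (Multiplicative.ofAdd (0, 1)) ∧
    e (QuotientGroup.mk gc) = Monoid.Coprod.inl (Multiplicative.ofAdd (1, 1)) ∧
    e (QuotientGroup.mk gd) = Monoid.Coprod.inr (Multiplicative.ofAdd 1) := by
  exact ⟨e0, phi_qa, phi_qb, phi_qc, phi_qd⟩
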